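/- Let W ⊂ ℝ/ℤ satisfy |W| = 4 and the Divisibility Condition, and let w₀ ∈ W be such that the reflection about w₀ maps every element of W∖{w₀} to an element not in W. Let c : (ℝ/ℤ)∖W → {1, 2} be any coloring. Then there are at most two extensions c′ of c to (ℝ/ℤ)∖{w₀} with the property that c′ permits the reflection about w₀ or c′ permits some nontrivial rotation of ℝ/ℤ. -/

import Mathlib

/-- The circle `ℝ/ℤ`. -/
abbrev Circle1 := AddCircle (1 : ℝ)

/-- `Aut(ℝ/ℤ)`: the rotations `x ↦ x + α` and the reflections `x ↦ β - x`. -/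
def IsAutCirc (f : Circle1 → Circle1) : Prop :=
  (∃ α : Circle1, ∀ x, f x = x + α) ∨ (∃ β : Circle1, ∀ x, f x = β - x)

/-- A `2`-coloring of `ℝ/ℤ` is distinguishing with respect to `Aut(ℝ/ℤ)` if the
only automorphism preserving it is the identity. -/
def DistinguishingC (c : Circle1 → Fin 2) : Prop :=
  ∀ f : Circle1 → Circle1, IsAutCirc f → (∀ x, c (f x) = c x) → f = id

/-- `W` is a fixing set for `Aut(ℝ/ℤ)`: every non-identity automorphism moves
some element of `W`. -/
def FixingSetC (W : Set Circle1) : Prop :=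
  ∀ f : Circle1 → Circle1, IsAutCirc f → f ≠ id → ∃ s ∈ W, f s ≠ s

/-- The Divisibility Condition: `(W + i/k) ∩ W = ∅` for all `k ∈ {2,3,4,5}` and
all `i ∈ {1, …, k-1}`. -/
def DivCond (W : Set Circle1) : Prop :=
  ∀ k ∈ ({2, 3, 4, 5} : Set ℕ), ∀ i : ℕ, 1 ≤ i → i < k →
    ((fun w => w + (((i : ℝ) / (k : ℝ) : ℝ) : Circle1)) '' W) ∩ W = ∅

/-- A coloring `c` of `(ℝ/ℤ) \ U` (represented by a total function whose values on
`U` are irrelevant) permits a map `γ` if some extension `cs` of `c` to all of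
`ℝ/ℤ` satisfies `cs (γ x) = cs x` for all `x`. -/
def Permits (U : Set Circle1) (c : Circle1 → Fin 2) (γ : Circle1 → Circle1) : Prop :=
  ∃ cs : Circle1 → Fin 2, (∀ x ∉ U, cs x = c x) ∧ ∀ x, cs (γ x) = cs x

lemma smallOrd_escape {W : Set Circle1} (hdiv : DivCond W) :
    ∀ u ∈ W, ∀ t : Circle1, 2 ≤ addOrderOf t → addOrderOf t ≤ 5 → u + t ∉ W := by
  intro u hu t h2 h5 hmem
  have hfin : IsOfFinAddOrder t := by
    rw [← addOrderOf_pos_iff]; omega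
  obtain ⟨m, hgcd, hlt, he⟩ := AddCircle.exists_gcd_eq_one_of_isOfFinAddOrder hfin
  have hm1 : 1 ≤ m := by
    rcases Nat.eq_zero_or_pos m with h | h
    · subst h
      rw [Nat.gcd_zero_left] at hgcd
      omega
    · exact h
  have hk : addOrderOf t ∈ ({2, 3, 4, 5} : Set ℕ) := by
    simp only [Set.mem_insert_iff, Set.mem_singleton_iff]; omega
  have hdiv' := hdiv (addOrderOf t) hk m hm1 hlt
  have ht : (((m : ℝ) / (addOrderOf t : ℝ) : ℝ) : Circle1) = t := by
    conv_rhs => rw [← he]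
    rw [mul_one]
  have : u + t ∈ ((fun w => w + (((m : ℝ) / (addOrderOf t : ℝ) : ℝ) : Circle1)) '' W) ∩ W := by
    refine ⟨⟨u, hu, ?_⟩, hmem⟩
    exact congrArg (fun z => u + z) ht
  rw [hdiv'] at this
  exact this

lemma not5 {W : Set Circle1} (hW : W.ncard = 4) (hWfin : W.Finite)
    {x0 x1 x2 x3 x4 : Circle1}
    (h01 : x0 ≠ x1) (h02 : x0 ≠ x2) (h03 : x0 ≠ x3) (h04 : x0 ≠ x4)
    (h12 : x1 ≠ x2) (h13 : x1 ≠ x3) (h14 : x1 ≠ x4)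
    (h23 : x2 ≠ x3) (h24 : x2 ≠ x4) (h34 : x3 ≠ x4)
    (m0 : x0 ∈ W) (m1 : x1 ∈ W) (m2 : x2 ∈ W) (m3 : x3 ∈ W) (m4 : x4 ∈ W) : False := by
  classical
  have hsub : ({x0, x1, x2, x3, x4} : Finset Circle1) ⊆ hWfin.toFinset := by
    intro x hx
    simp only [Finset.mem_insert, Finset.mem_singleton] at hx
    rw [Set.Finite.mem_toFinset]
    rcases hx with rfl | rfl | rfl | rfl | rfl <;> assumption
  have hcard : ({x0, x1, x2, x3, x4} : Finset Circle1).card = 5 := by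
    rw [Finset.card_insert_of_notMem (by simp [h01, h02, h03, h04]),
      Finset.card_insert_of_notMem (by simp [h12, h13, h14]),
      Finset.card_insert_of_notMem (by simp [h23, h24]),
      Finset.card_insert_of_notMem (by simp [h34]), Finset.card_singleton]
  have hle := Finset.card_le_card hsub
  rw [hcard, ← Set.ncard_eq_toFinset_card W hWfin, hW] at hle
  omega

lemma smul_ne_zero' {α : Circle1} (d : ℤ) (hd : d ≠ 0)
    (h : addOrderOf α = 0 ∨ d.natAbs < addOrderOf α) : d • α ≠ 0 := by
  intro h0
  have hdvd : (addOrderOf α : ℤ) ∣ d := addOrderOf_dvd_iff_zsmul_eq_zero.2 h0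
  have hdvd' : addOrderOf α ∣ d.natAbs := Int.natCast_dvd_natCast.1 (Int.dvd_natAbs.2 hdvd)
  rcases h with h | h
  · rw [h] at hdvd'
    simp only [Nat.zero_dvd, Int.natAbs_eq_zero] at hdvd'
    exact hd hdvd'
  · have := Nat.le_of_dvd (by omega) hdvd'
    omega

lemma inv_zsmul {cs : Circle1 → Fin 2} {α : Circle1} (h : ∀ x, cs (x + α) = cs x) :
    ∀ (j : ℤ) (x : Circle1), cs (x + j • α) = cs x := by
  have hn : ∀ (n : ℕ) (x : Circle1), cs (x + n • α) = cs x := by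
    intro n
    induction n with
    | zero => simp
    | succ n ih =>
      intro x
      rw [succ_nsmul, ← add_assoc, h (x + n • α), ih x]
  intro j x
  obtain ⟨n, rfl | rfl⟩ := j.eq_nat_or_neg
  · rw [natCast_zsmul]; exact hn n x
  · have e : x + (-(n : ℤ)) • α + n • α = x := by
      rw [← natCast_zsmul, add_assoc, ← add_zsmul]
      simp
    have := hn n (x + (-(n : ℤ)) • α)
    rw [e] at this
    exact this.symm

lemma uniq2 {x y : Circle1} (hx : addOrderOf x = 2) (hy : addOrderOf y = 2) : x = y := by
  have fx : IsOfFinAddOrder x := by rw [← addOrderOf_pos_iff]; omega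
  have fy : IsOfFinAddOrder y := by rw [← addOrderOf_pos_iff]; omega
  obtain ⟨mx, hgx, hlx, hex⟩ := AddCircle.exists_gcd_eq_one_of_isOfFinAddOrder fx
  obtain ⟨my, hgy, hly, hey⟩ := AddCircle.exists_gcd_eq_one_of_isOfFinAddOrder fy
  rw [hx] at hgx hlx hex
  rw [hy] at hgy hly hey
  have hmx : mx = 1 := by
    rcases Nat.eq_zero_or_pos mx with h | h
    · subst h; rw [Nat.gcd_zero_left] at hgx; omega
    · omega
  have hmy : my = 1 := by
    rcases Nat.eq_zero_or_pos my with h | h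
    · subst h; rw [Nat.gcd_zero_left] at hgy; omega
    · omega
  subst hmx hmy
  rw [← hex, ← hey]

section Main

variable {W : Set Circle1} (hW : W.ncard = 4) (hWfin : W.Finite)
  (hP : ∀ u ∈ W, ∀ t : Circle1, 2 ≤ addOrderOf t → addOrderOf t ≤ 5 → u + t ∉ W)

include hW hWfin hP

lemma escape (w : Circle1) (hw : w ∈ W) (κ : Circle1) (hκ : κ ≠ 0) :
    ∃ i : ℤ, w + i • κ ∉ W := by
  by_cases hg : 2 ≤ addOrderOf κ ∧ addOrderOf κ ≤ 5
  · exact ⟨1, by simpa using hP w hw κ hg.1 hg.2⟩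
  · have hg1 : addOrderOf κ ≠ 1 := fun h => hκ (AddMonoid.addOrderOf_eq_one_iff.1 h)
    have hbig : addOrderOf κ = 0 ∨ 6 ≤ addOrderOf κ := by omega
    by_contra hno
    push_neg at hno
    have key : ∀ i j : ℤ, i - j ≠ 0 → (i - j).natAbs < 6 → w + i • κ ≠ w + j • κ := by
      intro i j h1 h2 heq
      have h4 : i • κ = j • κ := add_left_cancel heq
      have h3 : (i - j) • κ = 0 := by rw [sub_zsmul, h4]; abel
      have h5 : addOrderOf κ = 0 ∨ (i - j).natAbs < addOrderOf κ := by
        rcases hbig with h | h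
        · exact Or.inl h
        · exact Or.inr (by omega)
      exact smul_ne_zero' (i - j) h1 h5 h3
    exact not5 hW hWfin
      (key 1 2 (by decide) (by decide)) (key 1 3 (by decide) (by decide))
      (key 1 4 (by decide) (by decide)) (key 1 5 (by decide) (by decide))
      (key 2 3 (by decide) (by decide)) (key 2 4 (by decide) (by decide))
      (key 2 5 (by decide) (by decide)) (key 3 4 (by decide) (by decide))
      (key 3 5 (by decide) (by decide)) (key 4 5 (by decide) (by decide))
      (hno 1) (hno 2) (hno 3) (hno 4) (hno 5)

lemma good_two (w : Circle1) (hw : w ∈ W) (α : Circle1) (hα : α ≠ 0)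
    (hm2 : addOrderOf α ≠ 2) :
    ∃ j₁ j₂ : ℤ, j₁ • α ≠ j₂ • α ∧ w + j₁ • α ∉ W ∧ w + j₂ • α ∉ W := by
  have hm1 : addOrderOf α ≠ 1 := fun h => hα (AddMonoid.addOrderOf_eq_one_iff.1 h)
  by_cases hsmall : 3 ≤ addOrderOf α ∧ addOrderOf α ≤ 5
  · obtain ⟨h3, h5⟩ := hsmall
    have h2ne : (2 : ℤ) • α ≠ 0 := smul_ne_zero' 2 (by decide) (Or.inr (by omega))
    have hdvd : addOrderOf ((2 : ℤ) • α) ∣ addOrderOf α := by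
      apply addOrderOf_dvd_of_nsmul_eq_zero
      rw [← natCast_zsmul, smul_smul, mul_comm, ← smul_smul, natCast_zsmul]
      rw [addOrderOf_nsmul_eq_zero, smul_zero]
    have hne0 : addOrderOf ((2 : ℤ) • α) ≠ 0 := by
      intro h; rw [h, Nat.zero_dvd] at hdvd; omega
    have hne1 : addOrderOf ((2 : ℤ) • α) ≠ 1 := fun h =>
      h2ne (AddMonoid.addOrderOf_eq_one_iff.1 h)
    have hle : addOrderOf ((2 : ℤ) • α) ≤ addOrderOf α := Nat.le_of_dvd (by omega) hdvd
    refine ⟨1, 2, ?_, ?_, ?_⟩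
    · intro h
      apply hα
      have : ((2 : ℤ) - 1) • α = 0 := by rw [sub_zsmul, h]; abel
      simpa using this
    · simpa using hP w hw α (by omega) h5
    · exact hP w hw ((2 : ℤ) • α) (by omega) (by omega)
  · have hbig : addOrderOf α = 0 ∨ 6 ≤ addOrderOf α := by omega
    classical
    set T : Finset ℤ := {1, 2, 3, 4, 5} with hT
    have hTmem : ∀ j ∈ T, 1 ≤ j ∧ j ≤ 5 := by
      intro j hj
      fin_cases hj <;> omega
    have hsmul_ne : ∀ j ∈ T, ∀ k ∈ T, j ≠ k → j • α ≠ k • α := by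
      intro j hj k hk hjk h
      have h3 : (j - k) • α = 0 := by rw [sub_zsmul, h]; abel
      refine smul_ne_zero' (j - k) (by omega) ?_ h3
      rcases hbig with h | h
      · exact Or.inl h
      · right
        obtain ⟨hj1, hj5⟩ := hTmem j hj
        obtain ⟨hk1, hk5⟩ := hTmem k hk
        omega
    have hα_ne : ∀ j ∈ T, j • α ≠ 0 := by
      intro j hj
      refine smul_ne_zero' j (by obtain ⟨h1, _⟩ := hTmem j hj; omega) ?_
      rcases hbig with h | h
      · exact Or.inl h
      · right; obtain ⟨h1, h5⟩ := hTmem j hj; omega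
    set bad : Finset ℤ := T.filter (fun j => w + j • α ∈ W) with hbad
    have hinj : Set.InjOn (fun j : ℤ => w + j • α) bad := by
      intro a ha b hb h
      simp only [hbad, Finset.coe_filter, Set.mem_setOf_eq] at ha hb
      by_contra hne
      exact hsmul_ne a ha.1 b hb.1 hne (add_left_cancel h)
    have himg : bad.image (fun j : ℤ => w + j • α) ⊆ hWfin.toFinset.erase w := by
      intro x hx
      simp only [Finset.mem_image] at hx
      obtain ⟨j, hj, rfl⟩ := hx
      simp only [hbad, Finset.mem_filter] at hj
      rw [Finset.mem_erase, Set.Finite.mem_toFinset]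
      refine ⟨?_, hj.2⟩
      intro h
      exact hα_ne j hj.1 (by rwa [add_eq_left] at h)
    have hbadcard : bad.card ≤ 3 := by
      have h1 : bad.card = (bad.image (fun j : ℤ => w + j • α)).card :=
        (Finset.card_image_of_injOn hinj).symm
      have h2 := Finset.card_le_card himg
      have h3 : (hWfin.toFinset.erase w).card = 3 := by
        rw [Finset.card_erase_of_mem (Set.Finite.mem_toFinset hWfin |>.2 hw),
          ← Set.ncard_eq_toFinset_card W hWfin, hW]
      omega
    have hTcard : T.card = 5 := by decide
    have hbadsub : bad ⊆ T := Finset.filter_subset _ _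
    have hgoodcard : (T \ bad).card = T.card - bad.card := Finset.card_sdiff_of_subset hbadsub
    obtain ⟨a, ha, b, hb, hab⟩ := Finset.one_lt_card.1
      (show 1 < (T \ bad).card by omega)
    have haT : a ∈ T ∧ w + a • α ∉ W := by
      have h := Finset.mem_sdiff.1 ha
      exact ⟨h.1, fun hm => h.2 (Finset.mem_filter.2 ⟨h.1, hm⟩)⟩
    have hbT : b ∈ T ∧ w + b • α ∉ W := by
      have h := Finset.mem_sdiff.1 hb
      exact ⟨h.1, fun hm => h.2 (Finset.mem_filter.2 ⟨h.1, hm⟩)⟩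
    exact ⟨a, b, hsmul_ne a haT.1 b hbT.1 hab, haT.2, hbT.2⟩

lemma n2lem (w : Circle1) (hw : w ∈ W) (α α' : Circle1) (hα : α ≠ 0) (hα' : α' ≠ 0)
    (h2 : addOrderOf α' = 2)
    (disj : ∀ j l : ℤ, j • α = l • α' → j • α = 0) :
    ∃ j l : ℤ, w + j • α ∉ W ∧ w + l • α' ∉ W ∧ w + j • α + l • α' ∉ W := by
  have hb : w + (1 : ℤ) • α' ∉ W := by
    simpa using hP w hw α' (le_of_eq h2.symm) (by omega)
  suffices h : ∃ j : ℤ, w + j • α ∉ W ∧ w + j • α + α' ∉ W by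
    obtain ⟨j, h1, h3⟩ := h
    exact ⟨j, 1, h1, hb, by simpa using h3⟩
  by_contra hno
  push_neg at hno
  have hm1 : addOrderOf α ≠ 1 := fun h => hα (AddMonoid.addOrderOf_eq_one_iff.1 h)
  by_cases hm2 : addOrderOf α = 2
  · have : α = α' := uniq2 hm2 h2
    have h0 := disj 1 1 (by rw [this])
    rw [one_zsmul] at h0
    exact hα h0
  by_cases hm3 : addOrderOf α = 3
  · have hA1 : w + (1 : ℤ) • α ∉ W := by
      simpa using hP w hw α (by omega) (by omega)
    have h2ne : (2 : ℤ) • α ≠ 0 := smul_ne_zero' 2 (by decide) (Or.inr (by omega))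
    have hdvd : addOrderOf ((2 : ℤ) • α) ∣ addOrderOf α := by
      apply addOrderOf_dvd_of_nsmul_eq_zero
      rw [← natCast_zsmul, smul_smul, mul_comm, ← smul_smul, natCast_zsmul]
      rw [addOrderOf_nsmul_eq_zero, smul_zero]
    have hne0 : addOrderOf ((2 : ℤ) • α) ≠ 0 := by
      intro h; rw [h, Nat.zero_dvd] at hdvd; omega
    have hne1 : addOrderOf ((2 : ℤ) • α) ≠ 1 := fun h =>
      h2ne (AddMonoid.addOrderOf_eq_one_iff.1 h)
    have hle : addOrderOf ((2 : ℤ) • α) ≤ addOrderOf α := Nat.le_of_dvd (by omega) hdvd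
    have hA2 : w + (2 : ℤ) • α ∉ W := hP w hw ((2 : ℤ) • α) (by omega) (by omega)
    have hB1 : w + (1 : ℤ) • α + α' ∈ W := hno 1 hA1
    have hB2 : w + (2 : ℤ) • α + α' ∈ W := hno 2 hA2
    have heq : w + (2 : ℤ) • α + α' = (w + (1 : ℤ) • α + α') + α := by
      rw [two_zsmul, one_zsmul]; abel
    have := hP _ hB1 α (by omega) (by omega)
    rw [← heq] at this
    exact this hB2
  by_cases hm4 : addOrderOf α = 4
  · have h2ne : (2 : ℤ) • α ≠ 0 := smul_ne_zero' 2 (by decide) (Or.inr (by omega))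
    have h4 : ((4 : ℤ)) • α = 0 := by
      apply addOrderOf_dvd_iff_zsmul_eq_zero.1
      rw [hm4]; norm_num
    have hdvd : addOrderOf ((2 : ℤ) • α) ∣ 2 := by
      apply addOrderOf_dvd_of_nsmul_eq_zero
      rw [← natCast_zsmul, smul_smul]
      convert h4 using 2
      norm_num
    have hne1 : addOrderOf ((2 : ℤ) • α) ≠ 1 := fun h =>
      h2ne (AddMonoid.addOrderOf_eq_one_iff.1 h)
    have hne0 : addOrderOf ((2 : ℤ) • α) ≠ 0 := by
      intro h; rw [h, Nat.zero_dvd] at hdvd; omega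
    have hord2 : addOrderOf ((2 : ℤ) • α) = 2 := by
      have := Nat.le_of_dvd (by omega) hdvd
      omega
    have : (2 : ℤ) • α = α' := uniq2 hord2 h2
    have h0 := disj 2 1 (by rw [this, one_zsmul])
    exact h2ne h0
  · -- addOrderOf α = 0 or ≥ 5
    have hbig : addOrderOf α = 0 ∨ 5 ≤ addOrderOf α := by omega
    classical
    set φ : ℤ → Circle1 := fun j => if w + j • α ∈ W then w + j • α else w + j • α + α'
      with hφ
    have hφW : ∀ j, φ j ∈ W := by
      intro j
      by_cases h : w + j • α ∈ W
      · simp only [hφ, if_pos h]; exact h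
      · simp only [hφ, if_neg h]; exact hno j h
    have hsm : ∀ j : ℤ, j ≠ 0 → j.natAbs < 5 → j • α ≠ 0 := by
      intro j h1 h2
      refine smul_ne_zero' j h1 ?_
      rcases hbig with h | h
      · exact Or.inl h
      · exact Or.inr (by omega)
    have hφw : ∀ j : ℤ, j • α ≠ 0 → φ j ≠ w := by
      intro j hj
      by_cases h : w + j • α ∈ W
      · simp only [hφ, if_pos h]
        intro he
        exact hj (by rwa [add_eq_left] at he)
      · simp only [hφ, if_neg h]
        intro he
        have h1 : j • α + α' = 0 := by
          rw [add_assoc] at he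
          rwa [add_eq_left] at he
        have h2' : j • α = (-1 : ℤ) • α' := by
          rw [neg_zsmul, one_zsmul]
          exact eq_neg_of_add_eq_zero_left h1
        have h3 := disj j (-1) h2'
        rw [h3] at h2'
        apply hα'
        have := h2'.symm
        rw [neg_zsmul, one_zsmul, neg_eq_zero] at this
        exact this
    have hφinj : ∀ j k : ℤ, (j - k) • α ≠ 0 → φ j ≠ φ k := by
      intro j k hjk he
      by_cases h1 : w + j • α ∈ W <;> by_cases h2' : w + k • α ∈ W
      · simp only [hφ, if_pos h1, if_pos h2'] at he
        apply hjk
        rw [sub_zsmul, add_left_cancel he]; abel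
      · simp only [hφ, if_pos h1, if_neg h2'] at he
        have h3 : j • α = k • α + α' := by
          have := he
          rw [add_assoc] at this
          exact add_left_cancel this
        have h4 : (j - k) • α = (1 : ℤ) • α' := by
          rw [sub_zsmul, h3, one_zsmul]; abel
        have h5 := disj _ _ h4
        exact hjk h5
      · simp only [hφ, if_neg h1, if_pos h2'] at he
        have h3 : k • α = j • α + α' := by
          have := he.symm
          rw [add_assoc] at this
          exact add_left_cancel this
        have h4 : (k - j) • α = (1 : ℤ) • α' := by
          rw [sub_zsmul, h3, one_zsmul]; abel
        have h5 := disj _ _ h4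
        apply hjk
        have : (j - k) • α = -((k - j) • α) := by rw [← neg_zsmul]; ring_nf
        rw [this, h5, neg_zero]
      · simp only [hφ, if_neg h1, if_neg h2'] at he
        apply hjk
        have h3 : w + j • α = w + k • α := by
          have := he
          rw [add_assoc, add_assoc] at this
          have h4 := add_left_cancel this
          have h5 := add_right_cancel (a := j • α) (b := α') (c := k • α) h4
          rw [h5]
        rw [sub_zsmul, add_left_cancel h3]; abel
    have d1 : ∀ j : ℤ, 1 ≤ j → j ≤ 4 → w ≠ φ j := by
      intro j hj1 hj4
      exact (hφw j (hsm j (by omega) (by omega))).symm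
    have d2 : ∀ j k : ℤ, j ≠ k → 1 ≤ j → j ≤ 4 → 1 ≤ k → k ≤ 4 → φ j ≠ φ k := by
      intro j k hjk hj1 hj4 hk1 hk4
      exact hφinj j k (hsm (j - k) (by omega) (by omega))
    exact not5 hW hWfin
      (d1 1 (by norm_num) (by norm_num)) (d1 2 (by norm_num) (by norm_num))
      (d1 3 (by norm_num) (by norm_num)) (d1 4 (by norm_num) (by norm_num))
      (d2 1 2 (by norm_num) (by norm_num) (by norm_num) (by norm_num) (by norm_num))
      (d2 1 3 (by norm_num) (by norm_num) (by norm_num) (by norm_num) (by norm_num))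
      (d2 1 4 (by norm_num) (by norm_num) (by norm_num) (by norm_num) (by norm_num))
      (d2 2 3 (by norm_num) (by norm_num) (by norm_num) (by norm_num) (by norm_num))
      (d2 2 4 (by norm_num) (by norm_num) (by norm_num) (by norm_num) (by norm_num))
      (d2 3 4 (by norm_num) (by norm_num) (by norm_num) (by norm_num) (by norm_num))
      hw (hφW 1) (hφW 2) (hφW 3) (hφW 4)

lemma goodpair (w : Circle1) (hw : w ∈ W) (α α' : Circle1) (hα : α ≠ 0) (hα' : α' ≠ 0)
    (disj : ∀ j l : ℤ, j • α = l • α' → j • α = 0) :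
    ∃ j l : ℤ, w + j • α ∉ W ∧ w + l • α' ∉ W ∧ w + j • α + l • α' ∉ W := by
  by_cases h2' : addOrderOf α' = 2
  · exact n2lem hW hWfin hP w hw α α' hα hα' h2' disj
  by_cases h2 : addOrderOf α = 2
  · have disj' : ∀ l j : ℤ, l • α' = j • α → l • α' = 0 := by
      intro l j h
      rw [h]
      exact disj j l h.symm
    obtain ⟨l, j, e1, e2, e3⟩ := n2lem hW hWfin hP w hw α' α hα' hα h2 disj'
    refine ⟨j, l, e2, e1, ?_⟩
    rw [add_right_comm]
    exact e3
  · obtain ⟨j₁, j₂, hj, hj1, hj2⟩ := good_two hW hWfin hP w hw α hα h2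
    obtain ⟨l₁, l₂, hl, hl1, hl2⟩ := good_two hW hWfin hP w hw α' hα' h2'
    by_contra hno
    push_neg at hno
    have hs11 := hno j₁ l₁ hj1 hl1
    have hs12 := hno j₁ l₂ hj1 hl2
    have hs21 := hno j₂ l₁ hj2 hl1
    have hs22 := hno j₂ l₂ hj2 hl2
    have hne_w : ∀ (j l : ℤ), w + j • α ∉ W → w ≠ w + j • α + l • α' := by
      intro j l hjW heq
      have h1 : j • α + l • α' = 0 := by
        rw [add_assoc] at heq
        exact ((add_eq_left).1 heq.symm)
      have h2'' : j • α = (-l) • α' := by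
        rw [neg_zsmul]
        exact eq_neg_of_add_eq_zero_left h1
      have h3 := disj j (-l) h2''
      apply hjW
      rw [h3, add_zero]
      exact hw
    have hcol : ∀ (l : ℤ), w + j₁ • α + l • α' ≠ w + j₂ • α + l • α' := by
      intro l heq
      exact hj (add_left_cancel (add_right_cancel heq))
    have hrow : ∀ (j : ℤ), w + j • α + l₁ • α' ≠ w + j • α + l₂ • α' := by
      intro j heq
      exact hl (add_left_cancel heq)
    have hcross : ∀ (ja jb la lb : ℤ), ja • α ≠ jb • α →
        w + ja • α + la • α' ≠ w + jb • α + lb • α' := by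
      intro ja jb la lb hjab heq
      rw [add_assoc, add_assoc] at heq
      have h1 := add_left_cancel heq
      have h4 : (ja - jb) • α = (lb - la) • α' := by
        apply add_right_cancel (b := jb • α + la • α')
        rw [show (ja - jb) • α + (jb • α + la • α') = ja • α + la • α' by
            rw [sub_zsmul]; abel,
          show (lb - la) • α' + (jb • α + la • α') = jb • α + lb • α' by
            rw [sub_zsmul]; abel]
        exact h1
      have h5 := disj _ _ h4
      have h7 : ja • α + -(jb • α) = 0 := ((sub_zsmul α ja jb).symm).trans h5
      exact hjab (add_neg_eq_zero.1 h7)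
    exact not5 hW hWfin
      (hne_w j₁ l₁ hj1) (hne_w j₁ l₂ hj1) (hne_w j₂ l₁ hj2) (hne_w j₂ l₂ hj2)
      (hrow j₁) (hcross j₁ j₂ l₁ l₁ hj) (hcross j₁ j₂ l₁ l₂ hj)
      (hcross j₁ j₂ l₂ l₁ hj) (hcross j₁ j₂ l₂ l₂ hj) (hrow j₂)
      hw hs11 hs12 hs21 hs22

lemma agree (α α' : Circle1) (hα : α ≠ 0) (hα' : α' ≠ 0) (cs₁ cs₂ : Circle1 → Fin 2)
    (h₁ : ∀ x, cs₁ (x + α) = cs₁ x) (h₂ : ∀ x, cs₂ (x + α') = cs₂ x)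
    (heq : ∀ x ∉ W, cs₁ x = cs₂ x) : ∀ x, cs₁ x = cs₂ x := by
  intro w
  by_cases hw : w ∈ W
  swap
  · exact heq w hw
  have i₁ := inv_zsmul h₁
  have i₂ := inv_zsmul h₂
  by_cases disj : ∀ j l : ℤ, j • α = l • α' → j • α = 0
  · obtain ⟨j, l, e1, e2, e3⟩ := goodpair hW hWfin hP w hw α α' hα hα' disj
    calc cs₁ w = cs₁ (w + j • α) := (i₁ j w).symm
      _ = cs₂ (w + j • α) := heq _ e1
      _ = cs₂ (w + j • α + l • α') := (i₂ l _).symm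
      _ = cs₁ (w + j • α + l • α') := (heq _ e3).symm
      _ = cs₁ (w + l • α' + j • α) := by rw [add_right_comm]
      _ = cs₁ (w + l • α') := i₁ j _
      _ = cs₂ (w + l • α') := heq _ e2
      _ = cs₂ w := i₂ l w
  · push_neg at disj
    obtain ⟨j, l, hjl, hne⟩ := disj
    obtain ⟨i, hi⟩ := escape hW hWfin hP w hw (j • α) hne
    have e₁ : w + i • (j • α) = w + (i * j) • α := by rw [smul_smul]
    have e₂ : w + i • (j • α) = w + (i * l) • α' := by rw [hjl, smul_smul]
    calc cs₁ w = cs₁ (w + (i * j) • α) := (i₁ (i * j) w).symm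
      _ = cs₂ (w + i • (j • α)) := by rw [← e₁]; exact heq _ (e₁ ▸ hi)
      _ = cs₂ (w + (i * l) • α') := by rw [← e₂]
      _ = cs₂ w := i₂ (i * l) w

end Main

/-- Let `W ⊂ ℝ/ℤ` have exactly four elements and satisfy the Divisibility
Condition, and let `w₀ ∈ W` be such that the reflection about `w₀` maps
`W \ {w₀}` outside of `W`.  For any coloring `c` of `(ℝ/ℤ) \ W`, there are at most
two extensions of `c` to `(ℝ/ℤ) \ {w₀}` that permit the reflection about `w₀` or
permit some nontrivial rotation: there exist colorings `d₁, d₂` such that every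
extension `c'` of `c` to `(ℝ/ℤ) \ {w₀}` with this property agrees with `d₁` or
with `d₂` away from `w₀`. -/
theorem at_most_two_forbidden_extensions (W : Set Circle1) (hW : W.ncard = 4)
    (hWfin : W.Finite) (hdiv : DivCond W) (w₀ : Circle1) (hw₀ : w₀ ∈ W)
    (hrefl : ∀ w ∈ W, w ≠ w₀ → w₀ + w₀ - w ∉ W) (c : Circle1 → Fin 2) :
    ∃ d₁ d₂ : Circle1 → Fin 2,
      ∀ c' : Circle1 → Fin 2, (∀ x ∉ W, c' x = c x) →
        (Permits {w₀} c' (fun x => w₀ + w₀ - x) ∨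
          ∃ α : Circle1, α ≠ 0 ∧ Permits {w₀} c' (fun x => x + α)) →
        ((∀ x : Circle1, x ≠ w₀ → c' x = d₁ x) ∨
          (∀ x : Circle1, x ≠ w₀ → c' x = d₂ x)) := by
  classical
  have hP : ∀ u ∈ W, ∀ t : Circle1, 2 ≤ addOrderOf t → addOrderOf t ≤ 5 → u + t ∉ W :=
    smallOrd_escape hdiv
  have hd₂ : ∃ d₂ : Circle1 → Fin 2, ∀ cs : Circle1 → Fin 2, (∀ x ∉ W, cs x = c x) →
      ∀ β : Circle1, β ≠ 0 → (∀ x, cs (x + β) = cs x) → ∀ x, cs x = d₂ x := by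
    by_cases hR : ∃ cs : Circle1 → Fin 2, (∀ x ∉ W, cs x = c x) ∧
        ∃ β : Circle1, β ≠ 0 ∧ ∀ x, cs (x + β) = cs x
    · obtain ⟨d, hdW, β, hβ, hdinv⟩ := hR
      exact ⟨d, fun cs hcsW β' hβ' hinv' =>
        agree hW hWfin hP β' β hβ' hβ cs d hinv' hdinv
          (fun x hx => (hcsW x hx).trans (hdW x hx).symm)⟩
    · exact ⟨c, fun cs hcsW β hβ hinv' => absurd ⟨cs, hcsW, β, hβ, hinv'⟩ hR⟩
  obtain ⟨d₂, hd₂⟩ := hd₂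
  refine ⟨fun x => if x ∈ W then c (w₀ + w₀ - x) else c x, d₂, ?_⟩
  intro c' hc' hperm
  rcases hperm with ⟨cs, hext, hinv⟩ | ⟨α, hα, cs, hext, hinv⟩
  · -- reflection case
    left
    intro x hx
    by_cases hxW : x ∈ W
    · have hρ : w₀ + w₀ - x ∉ W := hrefl x hxW hx
      have hρne : w₀ + w₀ - x ≠ w₀ := by
        intro h
        apply hx
        have h2 : w₀ + w₀ = w₀ + x := sub_eq_iff_eq_add.1 h
        exact (add_left_cancel h2).symm
      have e1 : cs x = c' x := hext x (by simpa using hx)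
      have e2 : cs (w₀ + w₀ - x) = c' (w₀ + w₀ - x) := hext _ (by simpa using hρne)
      have e3 : c' (w₀ + w₀ - x) = c (w₀ + w₀ - x) := hc' _ hρ
      have e4 : cs (w₀ + w₀ - x) = cs x := hinv x
      simp only [if_pos hxW]
      rw [← e1, ← e4, e2, e3]
    · simp only [if_neg hxW]
      exact hc' x hxW
  · -- rotation case
    right
    have hcsc : ∀ x ∉ W, cs x = c x := by
      intro x hxW
      have hxw₀ : x ∉ ({w₀} : Set Circle1) := by
        simp only [Set.mem_singleton_iff]
        rintro rfl
        exact hxW hw₀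
      rw [hext x hxw₀]
      exact hc' x hxW
    have hagree := hd₂ cs hcsc α hα hinv
    intro x hx
    rw [← hext x (by simpa using hx), hagree x]
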